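/- arXiv:0905.4758 — 2 statements merged into one kernel-verified Lean document; each statement's English description precedes it below -/
import Mathlib

section
/- Define F(n) = Σ_{π ∈ S_n} q^{des(π)}, where des(π) is the number of descents of π. Then for n ≥ 1, F(n) = Σ_{k=1}^{n} C(n,k) (q−1)^{k−1} F(n−k), with F(0) = 1. -/
open Finset Polynomial

/-- A permutation of `Fin n` as a word `{0,...,n-1} → {1,...,n}`. -/
def toWord (n : ℕ) (π : Equiv.Perm (Fin n)) : ℕ → ℕ :=
  fun k => if h : k < n then (π ⟨k, h⟩ : ℕ) + 1 else 0

/-- The number of descents of the word `w` of length `ℓ`. -/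
def desCount (w : ℕ → ℕ) (ℓ : ℕ) : ℕ :=
  ((range (ℓ - 1)).filter (fun i => w (i + 1) < w i)).card

/-- `F n = Σ_{π ∈ S_n} q^{des π}`. -/
noncomputable def F (n : ℕ) : Polynomial ℤ :=
  ∑ π : Equiv.Perm (Fin n), (X : Polynomial ℤ) ^ desCount (toWord n π) n

/-! ### Auxiliary definitions -/

/-- `π` has descents at all positions `< k-1`, i.e. its first `k` entries are decreasing. -/
def Dk (n k : ℕ) (π : Equiv.Perm (Fin n)) : Prop :=
  ∀ i < k - 1, toWord n π (i + 1) < toWord n π i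

instance (n k : ℕ) : DecidablePred (Dk n k) := fun _ => Nat.decidableBallLT _ _

/-- number of descents at positions in `[k, n-2]`. -/
def fk (n k : ℕ) (π : Equiv.Perm (Fin n)) : ℕ :=
  ((Ico k (n - 1)).filter (fun i => toWord n π (i + 1) < toWord n π i)).card

/-- number of descents at positions in `[k-1, n-2]`. -/
def ek (n k : ℕ) (π : Equiv.Perm (Fin n)) : ℕ :=
  ((Ico (k - 1) (n - 1)).filter (fun i => toWord n π (i + 1) < toWord n π i)).card

lemma toWord_lt_toWord {n : ℕ} (π : Equiv.Perm (Fin n)) {i j : ℕ} (hi : i < n) (hj : j < n) :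
    toWord n π i < toWord n π j ↔ π ⟨i, hi⟩ < π ⟨j, hj⟩ := by
  rw [toWord, toWord]
  rw [dif_pos hi, dif_pos hj, Fin.lt_def]
  omega

lemma desCount_eq_ek (n : ℕ) (π : Equiv.Perm (Fin n)) :
    desCount (toWord n π) n = ek n 1 π := by
  rw [desCount, ek, Finset.range_eq_Ico]

lemma Dk_mono {n k k' : ℕ} (h : k' ≤ k) {π : Equiv.Perm (Fin n)} (hD : Dk n k π) :
    Dk n k' π := fun i hi => hD i (by omega)

lemma Dk_one (n : ℕ) (π : Equiv.Perm (Fin n)) : Dk n 1 π := fun i hi => by omega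

/-! ### The telescoping lemma -/

lemma claim2 (n : ℕ) (π : Equiv.Perm (Fin n)) :
    ∀ d j, 1 ≤ j → j + d = n → Dk n j π →
      (∑ k ∈ Icc j n, if Dk n k π then ((X : Polynomial ℤ) - 1) ^ (k - j) * X ^ fk n k π else 0)
        = X ^ ek n j π := by
  intro d
  induction d with
  | zero =>
    intro j hj hjn hD
    have hjn0 : n = j := by omega
    subst hjn0
    rw [Finset.Icc_self, Finset.sum_singleton, if_pos hD, Nat.sub_self, pow_zero, one_mul]
    have h1 : fk n n π = 0 := by rw [fk, Finset.Ico_eq_empty (by omega)]; simp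
    have h2 : ek n n π = 0 := by rw [ek, Finset.Ico_self]; simp
    rw [h1, h2]
  | succ d ih =>
    intro j hj hjn hD
    have hjn' : j < n := by omega
    have hIcc : Icc j n = insert j (Icc (j + 1) n) := by
      ext x; simp only [Finset.mem_Icc, Finset.mem_insert]; omega
    have hnot : j ∉ Icc (j + 1) n := by simp only [Finset.mem_Icc]; omega
    rw [hIcc, Finset.sum_insert hnot, if_pos hD, Nat.sub_self, pow_zero, one_mul]
    by_cases hD1 : Dk n (j + 1) π
    · have hsum : (∑ k ∈ Icc (j + 1) n,
          if Dk n k π then ((X : Polynomial ℤ) - 1) ^ (k - j) * X ^ fk n k π else 0)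
          = (X - 1) * ∑ k ∈ Icc (j + 1) n,
              if Dk n k π then ((X : Polynomial ℤ) - 1) ^ (k - (j + 1)) * X ^ fk n k π else 0 := by
        rw [Finset.mul_sum]
        refine Finset.sum_congr rfl fun k hk => ?_
        have hk1 : j + 1 ≤ k := (Finset.mem_Icc.mp hk).1
        by_cases h : Dk n k π
        · rw [if_pos h, if_pos h]
          have hkj : k - j = (k - (j + 1)) + 1 := by omega
          rw [hkj, pow_succ]
          ring
        · rw [if_neg h, if_neg h, mul_zero]
      rw [hsum, ih (j + 1) (by omega) (by omega) hD1]
      have hfe : fk n j π = ek n (j + 1) π := by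
        rw [fk, ek, Nat.add_sub_cancel]
      have hstep : ek n j π = ek n (j + 1) π + 1 := by
        rw [ek, ek]
        have hins : Ico (j - 1) (n - 1) = insert (j - 1) (Ico (j + 1 - 1) (n - 1)) := by
          ext x; simp only [Finset.mem_Ico, Finset.mem_insert]; omega
        rw [hins, Finset.filter_insert, if_pos (hD1 (j - 1) (by omega))]
        rw [Finset.card_insert_of_notMem]
        intro hmem
        have := (Finset.mem_Ico.mp (Finset.mem_of_mem_filter _ hmem)).1
        omega
      rw [hfe, hstep, pow_succ]
      ring
    · have hzero : (∑ k ∈ Icc (j + 1) n,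
          if Dk n k π then ((X : Polynomial ℤ) - 1) ^ (k - j) * X ^ fk n k π else 0) = 0 := by
        refine Finset.sum_eq_zero fun k hk => ?_
        rw [if_neg]
        intro h; exact hD1 (Dk_mono (Finset.mem_Icc.mp hk).1 h)
      rw [hzero, add_zero]
      congr 1
      have hnd : ¬ (toWord n π (j - 1 + 1) < toWord n π (j - 1)) := by
        intro h
        apply hD1
        intro i hi
        rcases Nat.lt_or_ge i (j - 1) with h' | h'
        · exact hD i h'
        · have hieq : i = j - 1 := by omega
          rw [hieq]; exact h
      rw [fk, ek]
      have hins : Ico (j - 1) (n - 1) = insert (j - 1) (Ico j (n - 1)) := by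
        ext x; simp only [Finset.mem_Ico, Finset.mem_insert]; omega
      rw [hins, Finset.filter_insert, if_neg hnd]

/-! ### The bijection -/

section Bijection

variable {n k : ℕ}

lemma card_compl_eq (A : Finset (Fin n)) (hA : A.card = k) : Aᶜ.card = n - k := by
  rw [Finset.card_compl, hA, Fintype.card_fin]

/-- order isomorphism `Fin (n-k) ≃ complement of A`. -/
noncomputable def cordC (A : Finset (Fin n)) (hA : A.card = k) :
    Fin (n - k) ≃ {x : Fin n // x ∉ A} :=
  (Aᶜ.orderIsoOfFin (card_compl_eq A hA)).toEquiv.trans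
    (Equiv.subtypeEquivRight fun _ => Finset.mem_compl)

lemma cordC_val (A : Finset (Fin n)) (hA : A.card = k) (j : Fin (n - k)) :
    ((cordC A hA j : {x : Fin n // x ∉ A}) : Fin n)
      = Aᶜ.orderEmbOfFin (card_compl_eq A hA) j := by
  simp [cordC, Finset.coe_orderIsoOfFin_apply]

lemma cordC_congr {A B : Finset (Fin n)} (h : A = B) (hA : A.card = k) (hB : B.card = k)
    (j : Fin (n - k)) : ((cordC A hA j : {x : Fin n // x ∉ A}) : Fin n)
      = ((cordC B hB j : {x : Fin n // x ∉ B}) : Fin n) := by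
  subst h; rfl

/-- Build the permutation whose first `k` values are the elements of `A` in decreasing
order, followed by the pattern `σ` on the complement of `A`. -/
noncomputable def buildPerm (hkn : k ≤ n) (A : Finset (Fin n)) (hA : A.card = k)
    (σ : Equiv.Perm (Fin (n - k))) : Equiv.Perm (Fin n) :=
  ((finCongr (Nat.add_sub_cancel' hkn)).symm.trans
    (finSumFinEquiv.symm.trans
      ((Equiv.sumCongr (Fin.revPerm.trans (A.orderIsoOfFin hA).toEquiv)
          (σ.trans (cordC A hA))).trans
        (Equiv.sumCompl (fun x => x ∈ A)))))

lemma buildPerm_lo (hkn : k ≤ n) (A : Finset (Fin n)) (hA : A.card = k)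
    (σ : Equiv.Perm (Fin (n - k))) {i : ℕ} (hi : i < k) (hin : i < n) :
    buildPerm hkn A hA σ ⟨i, hin⟩ = A.orderEmbOfFin hA (Fin.rev ⟨i, hi⟩) := by
  have h1 : ((finCongr (Nat.add_sub_cancel' hkn)).symm ⟨i, hin⟩ : Fin (k + (n - k)))
      = Fin.castAdd (n - k) ⟨i, hi⟩ := by
    ext; simp
  rw [buildPerm]
  simp only [Equiv.trans_apply, h1, finSumFinEquiv_symm_apply_castAdd]
  simp [Finset.coe_orderIsoOfFin_apply]

lemma buildPerm_hi (hkn : k ≤ n) (A : Finset (Fin n)) (hA : A.card = k)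
    (σ : Equiv.Perm (Fin (n - k))) {j : ℕ} (hj : j < n - k) (hjn : k + j < n) :
    buildPerm hkn A hA σ ⟨k + j, hjn⟩ = ((cordC A hA (σ ⟨j, hj⟩) : {x : Fin n // x ∉ A}) : Fin n) := by
  have h1 : ((finCongr (Nat.add_sub_cancel' hkn)).symm ⟨k + j, hjn⟩ : Fin (k + (n - k)))
      = Fin.natAdd k ⟨j, hj⟩ := by
    ext; simp
  rw [buildPerm]
  simp only [Equiv.trans_apply, h1, finSumFinEquiv_symm_apply_natAdd]
  simp

end Bijection

/-! ### Descent properties of buildPerm -/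

section Bijection2

variable {n k : ℕ}

lemma Dk_lt (π : Equiv.Perm (Fin n)) {k : ℕ} (hD : Dk n k π) {a b : ℕ} (ha : a < b) (hb : b < k)
    (hbn : b < n) (han : a < n) : π ⟨b, hbn⟩ < π ⟨a, han⟩ := by
  induction b with
  | zero => omega
  | succ b ih =>
    have hbn' : b < n := by omega
    have hdesc : π ⟨b + 1, hbn⟩ < π ⟨b, hbn'⟩ := by
      have := hD b (by omega)
      rwa [toWord_lt_toWord π hbn hbn'] at this
    rcases Nat.lt_or_ge a b with h' | h'
    · exact lt_trans hdesc (ih (by omega) (by omega) hbn')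
    · have : a = b := by omega
      subst this
      exact hdesc

lemma buildPerm_mem_Dk (hkn : k ≤ n) (A : Finset (Fin n)) (hA : A.card = k)
    (σ : Equiv.Perm (Fin (n - k))) : Dk n k (buildPerm hkn A hA σ) := by
  intro i hi
  have hi1 : i + 1 < k := by omega
  have hik : i < k := by omega
  rw [toWord_lt_toWord _ (by omega) (by omega)]
  rw [buildPerm_lo hkn A hA σ hi1 (by omega), buildPerm_lo hkn A hA σ hik (by omega)]
  apply (A.orderEmbOfFin hA).strictMono
  rw [Fin.lt_def]
  simp only [Fin.val_rev]
  omega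

lemma buildPerm_desc_hi (hkn : k ≤ n) (A : Finset (Fin n)) (hA : A.card = k)
    (σ : Equiv.Perm (Fin (n - k))) {j : ℕ} (hj : j + 1 < n - k) :
    ((toWord n (buildPerm hkn A hA σ) (k + j + 1) < toWord n (buildPerm hkn A hA σ) (k + j))
      ↔ (toWord (n - k) σ (j + 1) < toWord (n - k) σ j)) := by
  rw [toWord_lt_toWord _ (by omega) (by omega), toWord_lt_toWord σ (by omega) (by omega)]
  have e1 : (⟨k + j + 1, by omega⟩ : Fin n) = ⟨k + (j + 1), by omega⟩ := rfl
  rw [e1, buildPerm_hi hkn A hA σ hj (by omega),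
    buildPerm_hi hkn A hA σ (show j < n - k by omega) (by omega),
    cordC_val, cordC_val]
  constructor
  · intro h
    exact ((Aᶜ.orderEmbOfFin (card_compl_eq A hA)).strictMono.lt_iff_lt).mp h
  · intro h
    exact (Aᶜ.orderEmbOfFin (card_compl_eq A hA)).strictMono h

lemma buildPerm_fk (hkn : k ≤ n) (A : Finset (Fin n)) (hA : A.card = k)
    (σ : Equiv.Perm (Fin (n - k))) :
    fk n k (buildPerm hkn A hA σ) = desCount (toWord (n - k) σ) (n - k) := by
  rw [fk, desCount]
  apply Finset.card_nbij' (i := fun i => i - k) (j := fun j => j + k)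
  · intro a ha
    rw [Finset.mem_coe, Finset.mem_filter, Finset.mem_Ico] at ha
    obtain ⟨⟨ha1, ha2⟩, hd⟩ := ha
    dsimp only
    rw [Finset.mem_coe, Finset.mem_filter, Finset.mem_range]
    have hj : (a - k) + 1 < n - k := by omega
    constructor
    · omega
    · have : a = k + (a - k) := by omega
      rw [this] at hd
      exact (buildPerm_desc_hi hkn A hA σ hj).mp hd
  · intro b hb
    rw [Finset.mem_coe, Finset.mem_filter, Finset.mem_range] at hb
    obtain ⟨hb1, hd⟩ := hb
    dsimp only
    rw [Finset.mem_coe, Finset.mem_filter, Finset.mem_Ico]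
    have hj : b + 1 < n - k := by omega
    refine ⟨⟨by omega, by omega⟩, ?_⟩
    have : b + k = k + b := by omega
    rw [this]
    exact (buildPerm_desc_hi hkn A hA σ hj).mpr hd
  · intro a ha
    rw [Finset.mem_coe, Finset.mem_filter, Finset.mem_Ico] at ha
    dsimp only
    omega
  · intro b _
    dsimp only
    omega

end Bijection2

/-! ### The inverse maps -/

section Bijection3

variable {n k : ℕ}

/-- The set of the first `k` values of `π`. -/
def prefSet (hkn : k ≤ n) (π : Equiv.Perm (Fin n)) : Finset (Fin n) :=
  (univ : Finset (Fin k)).map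
    ⟨fun i => π (Fin.castLE hkn i),
     fun a b hab => Fin.castLE_injective hkn (π.injective hab)⟩

lemma prefSet_card (hkn : k ≤ n) (π : Equiv.Perm (Fin n)) : (prefSet hkn π).card = k := by
  simp [prefSet]

lemma mem_prefSet {hkn : k ≤ n} {π : Equiv.Perm (Fin n)} {x : Fin n} :
    x ∈ prefSet hkn π ↔ ∃ i : Fin k, π (Fin.castLE hkn i) = x := by
  simp [prefSet]
  exact Iff.rfl

lemma suffix_not_mem (hkn : k ≤ n) (π : Equiv.Perm (Fin n)) {j : ℕ} (hj : j < n - k) :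
    π ⟨k + j, by omega⟩ ∉ prefSet hkn π := by
  rw [mem_prefSet]
  rintro ⟨i, hi⟩
  have h2 : (Fin.castLE hkn i) = (⟨k + j, by omega⟩ : Fin n) := π.injective hi
  have h3 : (i : ℕ) = k + j := congrArg Fin.val h2
  have := i.isLt
  omega

/-- The pattern of the suffix of `π` after position `k`. -/
noncomputable def patt (hkn : k ≤ n) (π : Equiv.Perm (Fin n)) : Equiv.Perm (Fin (n - k)) :=
  (Equiv.ofBijective
    (fun j : Fin (n - k) =>
      (⟨π ⟨k + j.val, by omega⟩, suffix_not_mem hkn π j.isLt⟩ :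
        {x : Fin n // x ∉ prefSet hkn π}))
    (by
      rw [Fintype.bijective_iff_injective_and_card]
      constructor
      · intro a b hab
        have h1 : π ⟨k + a.val, by omega⟩ = π ⟨k + b.val, by omega⟩ := congrArg Subtype.val hab
        have h2 := π.injective h1
        have h3 : k + a.val = k + b.val := congrArg Fin.val h2
        exact Fin.ext (by omega)
      · rw [Fintype.card_fin, Fintype.card_subtype_compl]
        rw [Fintype.card_coe, prefSet_card hkn π, Fintype.card_fin])).trans
    (cordC (prefSet hkn π) (prefSet_card hkn π)).symm

end Bijection3

section Bijection4

variable {n k : ℕ}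

lemma prefSet_buildPerm (hkn : k ≤ n) (A : Finset (Fin n)) (hA : A.card = k)
    (σ : Equiv.Perm (Fin (n - k))) : prefSet hkn (buildPerm hkn A hA σ) = A := by
  ext x
  rw [mem_prefSet]
  constructor
  · rintro ⟨i, rfl⟩
    have hcast : (Fin.castLE hkn i) = (⟨(i : ℕ), by omega⟩ : Fin n) := rfl
    rw [hcast, buildPerm_lo hkn A hA σ i.isLt (by omega)]
    exact Finset.orderEmbOfFin_mem A hA _
  · intro hx
    refine ⟨Fin.rev ((A.orderIsoOfFin hA).symm ⟨x, hx⟩), ?_⟩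
    set i0 := Fin.rev ((A.orderIsoOfFin hA).symm ⟨x, hx⟩) with hi0
    have hcast : (Fin.castLE hkn i0) = (⟨(i0 : ℕ), by omega⟩ : Fin n) := rfl
    rw [hcast, buildPerm_lo hkn A hA σ i0.isLt (by omega)]
    have h1 : Fin.rev ⟨(i0 : ℕ), i0.isLt⟩ = (A.orderIsoOfFin hA).symm ⟨x, hx⟩ := by
      have h2 : (⟨(i0 : ℕ), i0.isLt⟩ : Fin k) = i0 := rfl
      rw [h2, hi0, Fin.rev_rev]
    rw [h1, ← Finset.coe_orderIsoOfFin_apply]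
    simp

lemma patt_buildPerm (hkn : k ≤ n) (A : Finset (Fin n)) (hA : A.card = k)
    (σ : Equiv.Perm (Fin (n - k))) : patt hkn (buildPerm hkn A hA σ) = σ := by
  have hP := prefSet_buildPerm hkn A hA σ
  apply Equiv.ext
  intro j0
  rw [patt]
  simp only [Equiv.trans_apply, Equiv.ofBijective_apply]
  rw [Equiv.symm_apply_eq]
  apply Subtype.ext
  show buildPerm hkn A hA σ ⟨k + (j0 : ℕ), _⟩ = _
  rw [buildPerm_hi hkn A hA σ j0.isLt (by omega)]
  have h1 : σ ⟨(j0 : ℕ), j0.isLt⟩ = σ j0 := rfl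
  rw [h1]
  exact (cordC_congr hP (prefSet_card hkn _) hA (σ j0)).symm

lemma buildPerm_prefSet_patt (hkn : k ≤ n) (π : Equiv.Perm (Fin n)) (hD : Dk n k π) :
    buildPerm hkn (prefSet hkn π) (prefSet_card hkn π) (patt hkn π) = π := by
  apply Equiv.ext
  intro x
  rcases Nat.lt_or_ge (x : ℕ) k with hx | hx
  · have hmem : ∀ i : Fin k, π (Fin.castLE hkn (Fin.rev i)) ∈ prefSet hkn π :=
      fun i => mem_prefSet.mpr ⟨_, rfl⟩
    have hsm : StrictMono (fun i : Fin k => π (Fin.castLE hkn (Fin.rev i))) := by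
      intro i1 i2 h12
      have hrev : Fin.rev i2 < Fin.rev i1 := Fin.rev_lt_rev.mpr h12
      have := Dk_lt π hD (a := ((Fin.rev i2) : ℕ)) (b := ((Fin.rev i1) : ℕ)) hrev
        (Fin.rev i1).isLt (by omega) (by omega)
      exact this
    have huniq := Finset.orderEmbOfFin_unique (prefSet_card hkn π) hmem hsm
    have hxk : x = (⟨(x : ℕ), x.isLt⟩ : Fin n) := rfl
    rw [hxk, buildPerm_lo _ _ _ _ hx x.isLt]
    rw [← congrFun huniq (Fin.rev ⟨(x : ℕ), hx⟩)]
    congr 1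
    apply Fin.ext
    simp
  · have hj : (x : ℕ) - k < n - k := by have := x.isLt; omega
    have hxk : x = (⟨k + ((x : ℕ) - k), by omega⟩ : Fin n) :=
      Fin.ext (show (x : ℕ) = k + ((x : ℕ) - k) from by omega)
    rw [hxk, buildPerm_hi _ _ _ _ hj (by omega)]
    show ((cordC _ _) ((patt hkn π) ⟨(x : ℕ) - k, hj⟩) : Fin n) = _
    rw [patt]
    simp only [Equiv.trans_apply, Equiv.ofBijective_apply, Equiv.apply_symm_apply]

end Bijection4

/-! ### The counting lemma -/

lemma lemma1 (n k : ℕ) (hkn : k ≤ n) :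
    ∑ π ∈ univ.filter (Dk n k), (X : Polynomial ℤ) ^ fk n k π
      = (n.choose k : Polynomial ℤ) * F (n - k) := by
  classical
  have key : ∑ p ∈ (univ.powersetCard k : Finset (Finset (Fin n))) ×ˢ
        (univ : Finset (Equiv.Perm (Fin (n - k)))),
        (X : Polynomial ℤ) ^ desCount (toWord (n - k) p.2) (n - k)
      = ∑ π ∈ univ.filter (Dk n k), (X : Polynomial ℤ) ^ fk n k π := by
    refine Finset.sum_nbij'
      (i := fun p => if h : p.1.card = k then buildPerm hkn p.1 h p.2 else 1)
      (j := fun π => (prefSet hkn π, patt hkn π)) ?_ ?_ ?_ ?_ ?_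
    · rintro ⟨A, σ⟩ hp
      have hA : A.card = k := Finset.mem_powersetCard_univ.mp (Finset.mem_product.mp hp).1
      rw [Finset.mem_filter]
      refine ⟨Finset.mem_univ _, ?_⟩
      simp only [dif_pos hA]
      exact buildPerm_mem_Dk hkn A hA σ
    · intro π _
      rw [Finset.mem_product]
      exact ⟨Finset.mem_powersetCard_univ.mpr (prefSet_card hkn π), Finset.mem_univ _⟩
    · rintro ⟨A, σ⟩ hp
      have hA : A.card = k := Finset.mem_powersetCard_univ.mp (Finset.mem_product.mp hp).1
      simp only [dif_pos hA]
      exact Prod.ext (prefSet_buildPerm hkn A hA σ) (patt_buildPerm hkn A hA σ)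
    · intro π hπ
      have hD : Dk n k π := (Finset.mem_filter.mp hπ).2
      simp only [dif_pos (prefSet_card hkn π)]
      exact buildPerm_prefSet_patt hkn π hD
    · rintro ⟨A, σ⟩ hp
      have hA : A.card = k := Finset.mem_powersetCard_univ.mp (Finset.mem_product.mp hp).1
      simp only [dif_pos hA]
      rw [buildPerm_fk hkn A hA σ]
  rw [← key, Finset.sum_product]
  have h2 : ∑ A ∈ (univ.powersetCard k : Finset (Finset (Fin n))),
      (∑ σ : Equiv.Perm (Fin (n - k)),
        (X : Polynomial ℤ) ^ desCount (toWord (n - k) ((A, σ).2)) (n - k))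
      = ∑ _A ∈ (univ.powersetCard k : Finset (Finset (Fin n))), F (n - k) :=
    Finset.sum_congr rfl fun _ _ => rfl
  rw [h2, Finset.sum_const, Finset.card_powersetCard, Finset.card_univ,
    Fintype.card_fin, nsmul_eq_mul]

theorem eulerian_recurrence :
    F 0 = 1 ∧ ∀ n, 1 ≤ n →
      F n = ∑ k ∈ Icc 1 n, (n.choose k : Polynomial ℤ) * (X - 1) ^ (k - 1) * F (n - k) := by
  constructor
  · have h0 : ∀ π : Equiv.Perm (Fin 0), desCount (toWord 0 π) 0 = 0 := fun π => by
      simp [desCount]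
    simp [F, h0]
  · intro n hn
    have e1 : F n = ∑ π : Equiv.Perm (Fin n),
        ∑ k ∈ Icc 1 n, if Dk n k π then ((X : Polynomial ℤ) - 1) ^ (k - 1) * X ^ fk n k π else 0 := by
      rw [F]
      refine Finset.sum_congr rfl fun π _ => ?_
      rw [desCount_eq_ek, claim2 n π (n - 1) 1 le_rfl (by omega) (Dk_one n π)]
    rw [e1, Finset.sum_comm]
    refine Finset.sum_congr rfl fun k hk => ?_
    have hkn : k ≤ n := (Finset.mem_Icc.mp hk).2
    rw [← Finset.sum_filter]
    have : ∀ π ∈ univ.filter (Dk n k),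
        ((X : Polynomial ℤ) - 1) ^ (k - 1) * X ^ fk n k π
          = ((X : Polynomial ℤ) - 1) ^ (k - 1) * X ^ fk n k π := fun _ _ => rfl
    rw [← Finset.mul_sum, lemma1 n k hkn]
    ring
end

section
/- Let a(n,k) = Σ_{n ≥ t_1 > ⋯ > t_k ≥ 1} Π_{j=1}^{k−1} (q^{t_j − t_{j+1} − 1} − 1) and b(n,k) = Σ_{n ≥ t_1 > ⋯ > t_k ≥ 1} q^{−t_1} Π_{j=1}^{k−1} (q^{t_j − t_{j+1} − 1} − 1). Then for n ≥ 1 and k ≥ 2: a(n,k) = a(n−1,k) + q^{n−1} b(n−1,k−1) − a(n−1,k−1), and b(n,k) = b(n−1,k) + q^{−n}(q^{n−1} b(n−1,k−1) − a(n−1,k−1)). -/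
open Finset

lemma sort_insert_top (n : ℕ) (S : Finset ℕ) (hS : ∀ x ∈ S, x ≤ n) :
    (insert (n+1) S).sort (· ≤ ·) = S.sort (· ≤ ·) ++ [n+1] := by
  have hmem : (n+1) ∉ S := fun h => by have := hS _ h; omega
  haveI : IsAntisymm ℕ (· ≤ ·) := ⟨fun _ _ => le_antisymm⟩
  refine (fun h1 h2 h3 => List.Perm.eq_of_pairwise' (r := (· ≤ ·)) h2 h3 h1) ?_ ?_ ?_
  · exact ((Finset.sort_perm_toList _ _).trans (Finset.toList_insert hmem)).trans
      (((Finset.sort_perm_toList _ _).symm.cons _).trans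
        (List.perm_append_singleton _ _).symm)
  · exact Finset.pairwise_sort _ _
  · refine List.pairwise_append.mpr ⟨Finset.pairwise_sort _ _, by simp, ?_⟩
    intro x hx y hy
    simp at hy; subst hy
    have := hS x ((Finset.mem_sort _).1 hx)
    omega


/-- `a n k = Σ_{n ≥ t_1 > ⋯ > t_k ≥ 1} Π_{j=1}^{k-1} (q^{t_j - t_{j+1} - 1} - 1)`; the sum
ranges over k-element subsets `S = {t_1 > ⋯ > t_k}` of `{1,...,n}`, and if `L` is `S`
sorted increasingly then `t_j = L[k-j]` (0-based). -/
noncomputable def a (n k : ℕ) : LaurentPolynomial ℤ :=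
  ∑ S ∈ (Finset.Icc 1 n).powersetCard k,
    ∏ j ∈ range (k - 1),
      ((LaurentPolynomial.T
          (((S.sort (· ≤ ·)).getD (k - j - 1) 0 : ℤ) -
            ((S.sort (· ≤ ·)).getD (k - j - 2) 0 : ℤ) - 1) : LaurentPolynomial ℤ) - 1)

/-- `b n k = Σ_{n ≥ t_1 > ⋯ > t_k ≥ 1} q^{-t_1} Π_{j=1}^{k-1} (q^{t_j - t_{j+1} - 1} - 1)`. -/
noncomputable def b (n k : ℕ) : LaurentPolynomial ℤ :=
  ∑ S ∈ (Finset.Icc 1 n).powersetCard k,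
    (LaurentPolynomial.T (-((S.sort (· ≤ ·)).getD (k - 1) 0 : ℤ)) : LaurentPolynomial ℤ) *
      ∏ j ∈ range (k - 1),
        ((LaurentPolynomial.T
            (((S.sort (· ≤ ·)).getD (k - j - 1) 0 : ℤ) -
              ((S.sort (· ≤ ·)).getD (k - j - 2) 0 : ℤ) - 1) : LaurentPolynomial ℤ) - 1)

theorem bca_auxiliary_recurrences (n k : ℕ) (hn : 1 ≤ n) (hk : 2 ≤ k) :
    a n k = a (n - 1) k + LaurentPolynomial.T ((n : ℤ) - 1) * b (n - 1) (k - 1)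
              - a (n - 1) (k - 1) ∧
    b n k = b (n - 1) k + LaurentPolynomial.T (-(n : ℤ)) *
              (LaurentPolynomial.T ((n : ℤ) - 1) * b (n - 1) (k - 1) - a (n - 1) (k - 1)) := by
  obtain ⟨m, rfl⟩ : ∃ m, k = m + 2 := ⟨k - 2, by omega⟩
  obtain ⟨n', rfl⟩ : ∃ n'', n = n'' + 1 := ⟨n - 1, by omega⟩
  clear hn hk
  have hIcc : Finset.Icc 1 (n' + 1) = insert (n' + 1) (Finset.Icc 1 n') := by
    ext x; simp [Finset.mem_Icc]; omega
  have hnot : (n' + 1) ∉ Finset.Icc 1 n' := by simp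
  have hdisj : Disjoint ((Finset.Icc 1 n').powersetCard (m + 2))
      (((Finset.Icc 1 n').powersetCard (m + 1)).image (insert (n' + 1))) := by
    rw [Finset.disjoint_left]
    intro S hS hS'
    obtain ⟨T, hT, rfl⟩ := Finset.mem_image.1 hS'
    have h1 := (Finset.mem_powersetCard.1 hS).1 (Finset.mem_insert_self _ _)
    exact hnot h1
  have hinj : ∀ x ∈ (Finset.Icc 1 n').powersetCard (m + 1),
      ∀ y ∈ (Finset.Icc 1 n').powersetCard (m + 1),
      insert (n' + 1) x = insert (n' + 1) y → x = y := by
    intro x hx y hy hxy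
    have hx' : (n' + 1) ∉ x := fun h => hnot ((Finset.mem_powersetCard.1 hx).1 h)
    have hy' : (n' + 1) ∉ y := fun h => hnot ((Finset.mem_powersetCard.1 hy).1 h)
    rw [← Finset.erase_insert hx', ← Finset.erase_insert hy', hxy]
  have hsplit : ∀ f : Finset ℕ → LaurentPolynomial ℤ,
      ∑ S ∈ (Finset.Icc 1 (n' + 1)).powersetCard (m + 2), f S
        = (∑ S ∈ (Finset.Icc 1 n').powersetCard (m + 2), f S)
          + ∑ S ∈ (Finset.Icc 1 n').powersetCard (m + 1), f (insert (n' + 1) S) := by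
    intro f
    rw [hIcc, Finset.powersetCard_succ_insert hnot, Finset.sum_union hdisj,
      Finset.sum_image hinj]
  -- per-term facts
  have hterm : ∀ S ∈ (Finset.Icc 1 n').powersetCard (m + 1),
      ((insert (n' + 1) S).sort (· ≤ ·)).getD (m + 1) 0 = n' + 1 ∧
      (∏ j ∈ range (m + 1),
          ((LaurentPolynomial.T
              ((((insert (n' + 1) S).sort (· ≤ ·)).getD (m + 2 - j - 1) 0 : ℤ) -
                (((insert (n' + 1) S).sort (· ≤ ·)).getD (m + 2 - j - 2) 0 : ℤ) - 1) :
              LaurentPolynomial ℤ) - 1))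
        = LaurentPolynomial.T ((↑(n' + 1) : ℤ) - 1) *
            (LaurentPolynomial.T (-((S.sort (· ≤ ·)).getD m 0 : ℤ)) *
              ∏ j ∈ range m,
                ((LaurentPolynomial.T
                    (((S.sort (· ≤ ·)).getD (m + 1 - j - 1) 0 : ℤ) -
                      ((S.sort (· ≤ ·)).getD (m + 1 - j - 2) 0 : ℤ) - 1) :
                    LaurentPolynomial ℤ) - 1))
          - ∏ j ∈ range m,
              ((LaurentPolynomial.T
                  (((S.sort (· ≤ ·)).getD (m + 1 - j - 1) 0 : ℤ) -
                    ((S.sort (· ≤ ·)).getD (m + 1 - j - 2) 0 : ℤ) - 1) :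
                  LaurentPolynomial ℤ) - 1) := by
    intro S hS
    obtain ⟨hsub, hcard⟩ := Finset.mem_powersetCard.1 hS
    have hle : ∀ x ∈ S, x ≤ n' := fun x hx => (Finset.mem_Icc.1 (hsub hx)).2
    have hsort : (insert (n' + 1) S).sort (· ≤ ·) = S.sort (· ≤ ·) ++ [n' + 1] :=
      sort_insert_top n' S hle
    have hlen : (S.sort (· ≤ ·)).length = m + 1 := by
      rw [Finset.length_sort, hcard]
    have h1 : ∀ i, i ≤ m → (S.sort (· ≤ ·) ++ [n' + 1]).getD i 0 = (S.sort (· ≤ ·)).getD i 0 :=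
      fun i hi => List.getD_append _ _ _ _ (by omega)
    have h2 : (S.sort (· ≤ ·) ++ [n' + 1]).getD (m + 1) 0 = n' + 1 := by
      rw [List.getD_append_right _ _ _ _ (by omega)]
      simp [hlen]
    rw [hsort]
    refine ⟨h2, ?_⟩
    rw [Finset.prod_range_succ']
    have hrest : (∏ j ∈ range m,
        ((LaurentPolynomial.T
            (((S.sort (· ≤ ·) ++ [n' + 1]).getD (m + 2 - (j + 1) - 1) 0 : ℤ) -
              ((S.sort (· ≤ ·) ++ [n' + 1]).getD (m + 2 - (j + 1) - 2) 0 : ℤ) - 1) :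
            LaurentPolynomial ℤ) - 1))
        = ∏ j ∈ range m,
            ((LaurentPolynomial.T
                (((S.sort (· ≤ ·)).getD (m + 1 - j - 1) 0 : ℤ) -
                  ((S.sort (· ≤ ·)).getD (m + 1 - j - 2) 0 : ℤ) - 1) :
                LaurentPolynomial ℤ) - 1) := by
      refine Finset.prod_congr rfl fun j hj => ?_
      have hj' : j < m := Finset.mem_range.1 hj
      have e1 : m + 2 - (j + 1) - 1 = m + 1 - j - 1 := by omega
      have e2 : m + 2 - (j + 1) - 2 = m + 1 - j - 2 := by omega
      rw [e1, e2, h1 _ (by omega), h1 _ (by omega)]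
    rw [hrest]
    have e3 : m + 2 - 0 - 1 = m + 1 := by omega
    have e4 : m + 2 - 0 - 2 = m := by omega
    rw [e3, e4, h2, h1 m le_rfl]
    have e5 : ((↑(n' + 1) : ℤ) - ((S.sort (· ≤ ·)).getD m 0 : ℤ) - 1)
        = ((↑(n' + 1) : ℤ) - 1) + (-((S.sort (· ≤ ·)).getD m 0 : ℤ)) := by push_cast; ring
    rw [e5, LaurentPolynomial.T_add]
    ring
  simp only [a, b, Nat.add_sub_cancel, show m + 2 - 1 = m + 1 from rfl,
    show m + 1 - 1 = m from rfl]
  constructor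
  · rw [hsplit, add_sub_assoc]
    congr 1
    rw [Finset.mul_sum, ← Finset.sum_sub_distrib]
    exact Finset.sum_congr rfl fun S hS => (hterm S hS).2
  · rw [hsplit]
    congr 1
    rw [Finset.mul_sum, ← Finset.sum_sub_distrib, Finset.mul_sum]
    refine Finset.sum_congr rfl fun S hS => ?_
    rw [(hterm S hS).1, (hterm S hS).2]
end
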